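/- Let H be a complex inner product space of finite dimension N, let F = {f_i}_{i=1}^M be a frame for H, let {q_i}_{i=1}^M be positive real weights with ∑_{i=1}^M 1/q_i = N, and let G = {g_i}_{i=1}^M be a dual of F such that q_i |⟨f_i, g_i⟩| ≤ 1 for every i (i.e., r₁^q(F,G) = 1, the minimal possible value). Then for every i ∈ {1,…,M}, ⟨f_i, g_i⟩ is a nonnegative real number and q_i ⟨f_i, g_i⟩ = 1. -/

import Mathlib

/-- If `F` is a frame for an `N`-dimensional complex inner product space,
`{q_i}` are positive weights with `∑ 1/q_i = N`, and `G` is a dual of `F` with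
`q_i |⟨f_i, g_i⟩| ≤ 1` for all `i` (i.e. `r₁^q(F,G) = 1`, the minimal possible value),
then each `⟨f_i, g_i⟩` is a nonnegative real and `q_i ⟨f_i, g_i⟩ = 1`.
The paper's inner product `⟨a, b⟩` is Mathlib's `⟪b, a⟫_ℂ`. -/
theorem optimal_dual_diag_inner_eq_inv_weight
    {H : Type*} [NormedAddCommGroup H] [InnerProductSpace ℂ H] [FiniteDimensional ℂ H]
    {N M : ℕ} (hN : Module.finrank ℂ H = N)
    (F : Fin M → H) (hF : Submodule.span ℂ (Set.range F) = ⊤)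
    (q : Fin M → ℝ) (hq : ∀ i, 0 < q i) (hqsum : ∑ i, 1 / q i = (N : ℝ))
    (G : Fin M → H) (hG : ∀ f : H, ∑ i, (inner ℂ (F i) f : ℂ) • G i = f)
    (hopt : ∀ i, q i * ‖(inner ℂ (G i) (F i) : ℂ)‖ ≤ 1) :
    ∀ i, (inner ℂ (G i) (F i) : ℂ).im = 0 ∧ 0 ≤ (inner ℂ (G i) (F i) : ℂ).re ∧
      (q i : ℂ) * (inner ℂ (G i) (F i) : ℂ) = 1 := by
  -- orthonormal basis
  subst hN
  let b := stdOrthonormalBasis ℂ H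
  -- trace identity: ∑ i, ⟪F i, G i⟫ = N
  have key : ∑ i, (inner ℂ (F i) (G i) : ℂ) = (Module.finrank ℂ H : ℂ) := by
    have h1 : ∀ j, (inner ℂ (b j) (∑ i, (inner ℂ (F i) (b j) : ℂ) • G i) : ℂ) = 1 := by
      intro j
      rw [hG (b j)]
      simp [b.orthonormal.1 j, inner_self_eq_norm_sq_to_K]
    have h2 : ∑ j, ∑ i, (inner ℂ (F i) (b j) : ℂ) * (inner ℂ (b j) (G i) : ℂ)
        = (Module.finrank ℂ H : ℂ) := by
      calc ∑ j, ∑ i, (inner ℂ (F i) (b j) : ℂ) * (inner ℂ (b j) (G i) : ℂ)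
          = ∑ j, (inner ℂ (b j) (∑ i, (inner ℂ (F i) (b j) : ℂ) • G i) : ℂ) := by
            refine Finset.sum_congr rfl fun j _ => ?_
            rw [inner_sum]
            refine Finset.sum_congr rfl fun i _ => ?_
            rw [inner_smul_right]
        _ = ∑ _j : Fin (Module.finrank ℂ H), (1 : ℂ) := by
            exact Finset.sum_congr rfl fun j _ => h1 j
        _ = (Module.finrank ℂ H : ℂ) := by simp
    rw [← h2, Finset.sum_comm]
    exact Finset.sum_congr rfl fun i _ => (b.sum_inner_mul_inner (F i) (G i)).symm
  -- real parts
  have hre : ∑ i, (inner ℂ (F i) (G i) : ℂ).re = (Module.finrank ℂ H : ℝ) := by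
    have := congrArg Complex.re key
    rwa [Complex.re_sum] at this
  have hconj : ∀ i, (inner ℂ (F i) (G i) : ℂ) = starRingEnd ℂ (inner ℂ (G i) (F i) : ℂ) :=
    fun i => (inner_conj_symm (F i) (G i)).symm
  have hre' : ∑ i, ((inner ℂ (G i) (F i) : ℂ)).re = (Module.finrank ℂ H : ℝ) := by
    rw [← hre]
    exact Finset.sum_congr rfl fun i _ => by rw [hconj i, Complex.conj_re]
  -- termwise bound
  have hle : ∀ i, (inner ℂ (G i) (F i) : ℂ).re ≤ 1 / q i := by
    intro i
    have h1 : (inner ℂ (G i) (F i) : ℂ).re ≤ ‖(inner ℂ (G i) (F i) : ℂ)‖ :=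
      Complex.re_le_norm _
    have h2 : ‖(inner ℂ (G i) (F i) : ℂ)‖ ≤ 1 / q i := by
      rw [le_div_iff₀ (hq i), mul_comm]
      exact hopt i
    linarith
  have heach : ∀ i ∈ Finset.univ, (inner ℂ (G i) (F i) : ℂ).re = 1 / q i := by
    apply (Finset.sum_eq_sum_iff_of_le (fun i _ => hle i)).1
    rw [hre', hqsum]
  intro i
  have h1 : (inner ℂ (G i) (F i) : ℂ).re = 1 / q i := heach i (Finset.mem_univ i)
  have habs : ‖(inner ℂ (G i) (F i) : ℂ)‖ ≤ 1 / q i := by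
    rw [le_div_iff₀ (hq i), mul_comm]; exact hopt i
  have habs' : ‖(inner ℂ (G i) (F i) : ℂ)‖ = (inner ℂ (G i) (F i) : ℂ).re := by
    have := Complex.re_le_norm (inner ℂ (G i) (F i) : ℂ)
    linarith [h1 ▸ habs]
  have him : (inner ℂ (G i) (F i) : ℂ).im = 0 := by
    have hsq : ‖(inner ℂ (G i) (F i) : ℂ)‖ ^ 2
        = (inner ℂ (G i) (F i) : ℂ).re ^ 2 + (inner ℂ (G i) (F i) : ℂ).im ^ 2 := by
      rw [Complex.sq_norm, Complex.normSq_apply]; ring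
    rw [habs'] at hsq
    nlinarith [sq_nonneg ((inner ℂ (G i) (F i) : ℂ).im)]
  refine ⟨him, ?_, ?_⟩
  · rw [h1]; exact (div_pos one_pos (hq i)).le
  · apply Complex.ext
    · simp [Complex.mul_re, him, h1]
      exact div_self (hq i).ne'
    · simp [Complex.mul_im, him]
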